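/- Let A ∈ ℝ^{N×N} be block partitioned into n×n blocks A_{ij} ∈ ℝ^{k_i×k_j}. Suppose there exist positive definite P_i ∈ ℝ^{k_i×k_i} and positive semidefinite matrices W_{ij} ∈ ℝ^{k_i×k_i}, V_{ij} ∈ ℝ^{k_j×k_j} such that: (a) P_i A_{ii} + A_{ii}ᵀ P_i + V_{ii} + W_{ii} ⪯ 0 for all i; (b) the block matrix [[W_{ij}, -P_i A_{ij}], [-A_{ij}ᵀ P_i, V_{ij}]] ⪰ 0 for all i ≠ j; (c) V_{ii} ≻ Σ_{j≠i} V_{ji} and W_{ii} ≻ Σ_{j≠i} W_{ij} for all i. Then the block-diagonal matrix P = diag(P_1,…,P_n) is positive definite and P·A + Aᵀ·P is negative definite. -/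

import Mathlib

open Matrix Finset

def blk {n : ℕ} {k : Fin n → ℕ} {R : Type*}
    (A : Matrix ((i : Fin n) × Fin (k i)) ((i : Fin n) × Fin (k i)) R)
    (i j : Fin n) : Matrix (Fin (k i)) (Fin (k j)) R :=
  Matrix.of fun a b => A ⟨i, a⟩ ⟨j, b⟩

section Helpers

variable {n : ℕ} {k : Fin n → ℕ}

def subv (x : ((i : Fin n) × Fin (k i)) → ℝ) (i : Fin n) : Fin (k i) → ℝ :=
  fun a => x ⟨i, a⟩

lemma quad_sigma (M : Matrix ((i : Fin n) × Fin (k i)) ((i : Fin n) × Fin (k i)) ℝ)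
    (x : ((i : Fin n) × Fin (k i)) → ℝ) :
    x ⬝ᵥ M *ᵥ x = ∑ i, ∑ j, subv x i ⬝ᵥ (blk M i j) *ᵥ subv x j := by
  simp only [dotProduct, mulVec, blk, subv, of_apply, Finset.mul_sum,
    ← Finset.univ_sigma_univ, Finset.sum_sigma]
  exact Finset.sum_congr rfl fun i _ => by rw [Finset.sum_comm]

lemma blk_mul_left (M : Matrix ((i : Fin n) × Fin (k i)) ((i : Fin n) × Fin (k i)) ℝ)
    (P : ∀ i, Matrix (Fin (k i)) (Fin (k i)) ℝ) (i j : Fin n) :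
    blk (Matrix.blockDiagonal' P * M) i j = P i * blk M i j := by
  ext a b
  simp only [blk, of_apply, mul_apply, ← Finset.univ_sigma_univ, Finset.sum_sigma]
  rw [Finset.sum_eq_single i]
  · simp [blockDiagonal'_apply_eq]
  · intro l _ hl
    simp [blockDiagonal'_apply_ne _ _ _ (Ne.symm hl)]
  · simp

lemma blk_blockDiagonal'_eq (P : ∀ i, Matrix (Fin (k i)) (Fin (k i)) ℝ) (i : Fin n) :
    blk (Matrix.blockDiagonal' P) i i = P i := by
  ext a b; simp [blk, blockDiagonal'_apply_eq]

lemma blk_blockDiagonal'_ne (P : ∀ i, Matrix (Fin (k i)) (Fin (k i)) ℝ) {i j : Fin n}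
    (h : i ≠ j) : blk (Matrix.blockDiagonal' P) i j = 0 := by
  ext a b; simp [blk, blockDiagonal'_apply_ne _ _ _ h]

lemma subv_ne_zero {x : ((i : Fin n) × Fin (k i)) → ℝ} (hx : x ≠ 0) :
    ∃ i, subv x i ≠ 0 := by
  obtain ⟨⟨i, a⟩, hp⟩ := Function.ne_iff.mp hx
  exact ⟨i, fun h => hp (congrFun h a)⟩

lemma dot_transpose {m m' : Type*} [Fintype m] [Fintype m'] (M : Matrix m m' ℝ)
    (u : m → ℝ) (v : m' → ℝ) : v ⬝ᵥ Mᵀ *ᵥ u = u ⬝ᵥ M *ᵥ v := by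
  rw [mulVec_transpose, dotProduct_comm, dotProduct_mulVec]

lemma sum_mulVec' {ι m : Type*} [Fintype m] (s : Finset ι) (M : ι → Matrix m m ℝ)
    (y : m → ℝ) : (∑ j ∈ s, M j) *ᵥ y = ∑ j ∈ s, M j *ᵥ y := by
  ext a
  simp only [mulVec, dotProduct, Matrix.sum_apply, Finset.sum_apply, Finset.sum_mul]
  exact Finset.sum_comm

lemma dotProduct_sum' {ι m : Type*} [Fintype m] (s : Finset ι) (u : m → ℝ)
    (v : ι → m → ℝ) : u ⬝ᵥ (∑ j ∈ s, v j) = ∑ j ∈ s, u ⬝ᵥ v j := by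
  simp only [dotProduct, Finset.sum_apply, Finset.mul_sum]
  exact Finset.sum_comm

end Helpers

theorem block_lmi_implies_block_diagonal_stability {n : ℕ} (k : Fin n → ℕ)
    (A : Matrix ((i : Fin n) × Fin (k i)) ((i : Fin n) × Fin (k i)) ℝ)
    (P : ∀ i, Matrix (Fin (k i)) (Fin (k i)) ℝ)
    (W : ∀ (i _j : Fin n), Matrix (Fin (k i)) (Fin (k i)) ℝ)
    (V : ∀ (_i j : Fin n), Matrix (Fin (k j)) (Fin (k j)) ℝ)
    (hP : ∀ i, (P i).PosDef)
    (hW : ∀ i j, (W i j).PosSemidef)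
    (hV : ∀ i j, (V i j).PosSemidef)
    (ha : ∀ i, (-(P i * blk A i i + (blk A i i)ᵀ * P i + V i i + W i i)).PosSemidef)
    (hb : ∀ i j, i ≠ j →
      (Matrix.fromBlocks (W i j) (-(P i * blk A i j))
        (-((blk A i j)ᵀ * P i)) (V i j)).PosSemidef)
    (hcV : ∀ i, (V i i - ∑ j ∈ Finset.univ.erase i, V j i).PosDef)
    (hcW : ∀ i, (W i i - ∑ j ∈ Finset.univ.erase i, W i j).PosDef) :
    (Matrix.blockDiagonal' P).PosDef ∧
      (-(Matrix.blockDiagonal' P * A + Aᵀ * Matrix.blockDiagonal' P)).PosDef := by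
  have hPt : ∀ i, (P i)ᵀ = P i := fun i => by
    rw [← Matrix.conjTranspose_eq_transpose_of_trivial]; exact (hP i).1
  have hPH : (Matrix.blockDiagonal' P).IsHermitian := by
    rw [Matrix.IsHermitian, Matrix.blockDiagonal'_conjTranspose]
    exact congrArg _ (funext fun i => (hP i).1)
  have hPsym : (Matrix.blockDiagonal' P)ᵀ = Matrix.blockDiagonal' P := by
    rw [← Matrix.conjTranspose_eq_transpose_of_trivial]; exact hPH
  constructor
  · refine posDef_iff_dotProduct_mulVec.mpr ⟨hPH, fun x hx => ?_⟩
    rw [star_trivial, quad_sigma]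
    obtain ⟨i0, hi0⟩ := subv_ne_zero hx
    have hterm : ∀ i, ∑ j, subv x i ⬝ᵥ blk (Matrix.blockDiagonal' P) i j *ᵥ subv x j
        = subv x i ⬝ᵥ P i *ᵥ subv x i := by
      intro i
      rw [Finset.sum_eq_single i]
      · rw [blk_blockDiagonal'_eq]
      · intro j _ hj
        rw [blk_blockDiagonal'_ne P (Ne.symm hj)]
        simp
      · simp
    simp only [hterm]
    refine Finset.sum_pos' (fun i _ => ?_) ⟨i0, mem_univ i0, ?_⟩
    · have := (hP i).posSemidef.dotProduct_mulVec_nonneg (subv x i); rwa [star_trivial] at this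
    · have := (hP i0).dotProduct_mulVec_pos hi0; rwa [star_trivial] at this
  · have hherm : (-(Matrix.blockDiagonal' P * A + Aᵀ * Matrix.blockDiagonal' P)).IsHermitian := by
      rw [Matrix.IsHermitian]
      simp only [conjTranspose_eq_transpose_of_trivial, transpose_neg, transpose_add,
        transpose_mul, transpose_transpose, hPsym]
      rw [add_comm]
    refine posDef_iff_dotProduct_mulVec.mpr ⟨hherm, fun x hx => ?_⟩
    rw [star_trivial]
    set q : Fin n → Fin n → ℝ := fun i j => subv x i ⬝ᵥ (P i * blk A i j) *ᵥ subv x j with hq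
    set wq : Fin n → Fin n → ℝ := fun i j => subv x i ⬝ᵥ W i j *ᵥ subv x i with hwq
    set vq : Fin n → Fin n → ℝ := fun i j => subv x j ⬝ᵥ V i j *ᵥ subv x j with hvq
    have h1 : x ⬝ᵥ (Matrix.blockDiagonal' P * A) *ᵥ x = ∑ i, ∑ j, q i j := by
      rw [quad_sigma]
      exact Finset.sum_congr rfl fun i _ => Finset.sum_congr rfl fun j _ => by
        rw [blk_mul_left]
    have hform : x ⬝ᵥ (-(Matrix.blockDiagonal' P * A + Aᵀ * Matrix.blockDiagonal' P)) *ᵥ x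
        = -(2 * ∑ i, ∑ j, q i j) := by
      have h2 : x ⬝ᵥ (Aᵀ * Matrix.blockDiagonal' P) *ᵥ x
          = x ⬝ᵥ (Matrix.blockDiagonal' P * A) *ᵥ x := by
        have h3 : Aᵀ * Matrix.blockDiagonal' P = (Matrix.blockDiagonal' P * A)ᵀ := by
          rw [transpose_mul, hPsym]
        rw [h3, dot_transpose]
      rw [neg_mulVec, dotProduct_neg, add_mulVec, dotProduct_add, h1, h2, h1]
      ring
    have hdiag : ∀ i, 2 * q i i ≤ -(vq i i + wq i i) := by
      intro i
      have h0 := (ha i).dotProduct_mulVec_nonneg (subv x i)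
      rw [star_trivial] at h0
      have hT : subv x i ⬝ᵥ ((blk A i i)ᵀ * P i) *ᵥ subv x i = q i i := by
        have h : (blk A i i)ᵀ * P i = (P i * blk A i i)ᵀ := by rw [transpose_mul, hPt]
        rw [h, dot_transpose]
      simp only [neg_mulVec, dotProduct_neg, add_mulVec, dotProduct_add] at h0
      rw [hT] at h0
      simp only [hq, hwq, hvq]
      linarith
    have hoff : ∀ i j, i ≠ j → 2 * q i j ≤ wq i j + vq i j := by
      intro i j hij
      have h0 := (hb i j hij).dotProduct_mulVec_nonneg (Sum.elim (subv x i) (subv x j))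
      rw [star_trivial, fromBlocks_mulVec, sumElim_dotProduct_sumElim] at h0
      have hT : subv x j ⬝ᵥ ((blk A i j)ᵀ * P i) *ᵥ subv x i = q i j := by
        have h : (blk A i j)ᵀ * P i = (P i * blk A i j)ᵀ := by rw [transpose_mul, hPt]
        rw [h, dot_transpose]
      simp only [neg_mulVec, dotProduct_add, dotProduct_neg, Sum.elim_comp_inl,
        Sum.elim_comp_inr] at h0
      rw [hT] at h0
      simp only [hq, hwq, hvq]
      linarith
    -- split the double sum
    have hsplit : ∀ (f : Fin n → Fin n → ℝ),
        ∑ i, ∑ j, f i j = ∑ i, (f i i + ∑ j ∈ univ.erase i, f i j) := by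
      intro f
      refine Finset.sum_congr rfl fun i _ => ?_
      rw [Finset.sum_erase_eq_sub (mem_univ i)]
      ring
    have hswap : ∑ i, ∑ j ∈ univ.erase i, vq i j = ∑ i, ∑ j ∈ univ.erase i, vq j i := by
      simp only [Finset.sum_erase_eq_sub (mem_univ _), Finset.sum_sub_distrib]
      rw [Finset.sum_comm]
    set T : ℝ := ∑ i, ((wq i i - ∑ j ∈ univ.erase i, wq i j)
      + (vq i i - ∑ j ∈ univ.erase i, vq j i)) with hTdef
    have hbound : 2 * (∑ i, ∑ j, q i j) ≤ -T := by
      have e1 : 2 * (∑ i, ∑ j, q i j)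
          = ∑ i, (2 * q i i + ∑ j ∈ univ.erase i, 2 * q i j) := by
        rw [hsplit q, Finset.mul_sum]
        exact Finset.sum_congr rfl fun i _ => by rw [mul_add, Finset.mul_sum]
      have e2 : ∑ i, (2 * q i i + ∑ j ∈ univ.erase i, 2 * q i j)
          ≤ ∑ i, (-(vq i i + wq i i) + ∑ j ∈ univ.erase i, (wq i j + vq i j)) := by
        refine Finset.sum_le_sum fun i _ => ?_
        refine add_le_add (hdiag i) (Finset.sum_le_sum fun j hj => ?_)
        exact hoff i j (Ne.symm (Finset.ne_of_mem_erase hj))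
      have e3 : ∑ i, (-(vq i i + wq i i) + ∑ j ∈ univ.erase i, (wq i j + vq i j)) = -T := by
        have := hswap
        simp only [hTdef, neg_add, Finset.sum_add_distrib, Finset.sum_sub_distrib,
          Finset.sum_neg_distrib] at *
        linarith
      calc 2 * (∑ i, ∑ j, q i j) = _ := e1
        _ ≤ _ := e2
        _ = -T := e3
    have hTpos : 0 < T := by
      obtain ⟨i0, hi0⟩ := subv_ne_zero hx
      have hWq : ∀ i, subv x i ⬝ᵥ (W i i - ∑ j ∈ univ.erase i, W i j) *ᵥ subv x i
          = wq i i - ∑ j ∈ univ.erase i, wq i j := by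
        intro i
        rw [sub_mulVec, dotProduct_sub, sum_mulVec', dotProduct_sum']
      have hVq : ∀ i, subv x i ⬝ᵥ (V i i - ∑ j ∈ univ.erase i, V j i) *ᵥ subv x i
          = vq i i - ∑ j ∈ univ.erase i, vq j i := by
        intro i
        rw [sub_mulVec, dotProduct_sub, sum_mulVec', dotProduct_sum']
      refine Finset.sum_pos' (fun i _ => ?_) ⟨i0, mem_univ i0, ?_⟩
      · have h1 := (hcW i).posSemidef.dotProduct_mulVec_nonneg (subv x i)
        have h2 := (hcV i).posSemidef.dotProduct_mulVec_nonneg (subv x i)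
        rw [star_trivial, hWq] at h1
        rw [star_trivial, hVq] at h2
        linarith
      · have h1 := (hcW i0).dotProduct_mulVec_pos hi0
        have h2 := (hcV i0).posSemidef.dotProduct_mulVec_nonneg (subv x i0)
        rw [star_trivial, hWq] at h1
        rw [star_trivial, hVq] at h2
        linarith
    rw [hform]
    linarith
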